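/- arXiv:1106.1232 — 2 statements merged into one kernel-verified Lean document; each statement's English description precedes it below -/
import Mathlib

section
/- The system of equations val(v_win) = 1, val(v_lose) = 0, val(v) = max over successors for Eve's vertices, val(v) = min over successors for Adam's vertices, and val(v) = (1/2)·(val(v') + val(v'')) for random vertices with two successors, has at most one solution in [0,1]^V for a stopping simple stochastic game. -/
/-- The one-step relation induced by positional strategies `σ` (for Eve) and
`τ` (for Adam) in a simple stochastic game; from random vertices both successors
`r1 v`, `r2 v` are possible. -/
def ssgStep {V : Type*} (VE VA VR : Set V) (σ τ r1 r2 : V → V) (a b : V) : Prop :=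
  (a ∈ VE ∧ b = σ a) ∨ (a ∈ VA ∧ b = τ a) ∨ (a ∈ VR ∧ (b = r1 a ∨ b = r2 a))

theorem ssg_aux_le {V : Type*} [Fintype V]
    (VE VA VR : Set V) (succ : V → Set V)
    (hsucc : ∀ v, (succ v).Nonempty) (hfin : ∀ v, (succ v).Finite)
    (r1 r2 : V → V) (vwin vlose : V)
    (hstop : ∀ σ τ : V → V, (∀ v ∈ VE, σ v ∈ succ v) → (∀ v ∈ VA, τ v ∈ succ v) →
      ∀ v : V, Relation.ReflTransGen (ssgStep VE VA VR σ τ r1 r2) v vwin ∨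
        Relation.ReflTransGen (ssgStep VE VA VR σ τ r1 r2) v vlose)
    (val val' : V → ℝ)
    (hwinv : val vwin = 1) (hlosev : val vlose = 0)
    (hwinv' : val' vwin = 1) (hlosev' : val' vlose = 0)
    (hE : ∀ v ∈ VE, val v = sSup (val '' succ v))
    (hA : ∀ v ∈ VA, val v = sInf (val '' succ v))
    (hR : ∀ v ∈ VR, val v = (val (r1 v) + val (r2 v)) / 2)
    (hE' : ∀ v ∈ VE, val' v = sSup (val' '' succ v))
    (hA' : ∀ v ∈ VA, val' v = sInf (val' '' succ v))
    (hR' : ∀ v ∈ VR, val' v = (val' (r1 v) + val' (r2 v)) / 2) :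
    ∀ v, val v ≤ val' v := by
  classical
  obtain ⟨d, hd⟩ : ∃ d : V → ℝ, ∀ v, d v = val v - val' v := ⟨_, fun _ => rfl⟩
  -- Eve's strategy: maximize `val`
  have hσ : ∀ v, ∃ s ∈ succ v, val s = sSup (val '' succ v) := by
    intro v
    have h1 : (val '' succ v).Nonempty := (hsucc v).image val
    have h2 : (val '' succ v).Finite := (hfin v).image val
    obtain ⟨s, hs, hval⟩ := h1.csSup_mem h2
    exact ⟨s, hs, hval⟩
  -- Adam's strategy: minimize `val'`
  have hτ : ∀ v, ∃ s ∈ succ v, val' s = sInf (val' '' succ v) := by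
    intro v
    have h1 : (val' '' succ v).Nonempty := (hsucc v).image val'
    have h2 : (val' '' succ v).Finite := (hfin v).image val'
    obtain ⟨s, hs, hval⟩ := h1.csInf_mem h2
    exact ⟨s, hs, hval⟩
  set σ : V → V := fun v => (hσ v).choose with hσdef
  set τ : V → V := fun v => (hτ v).choose with hτdef
  have hσmem : ∀ v, σ v ∈ succ v := fun v => (hσ v).choose_spec.1
  have hσval : ∀ v, val (σ v) = sSup (val '' succ v) := fun v => (hσ v).choose_spec.2
  have hτmem : ∀ v, τ v ∈ succ v := fun v => (hτ v).choose_spec.1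
  have hτval : ∀ v, val' (τ v) = sInf (val' '' succ v) := fun v => (hτ v).choose_spec.2
  -- maximizer of d
  haveI : Nonempty V := ⟨vwin⟩
  obtain ⟨v0, -, hmax⟩ := Finset.exists_max_image (Finset.univ : Finset V) d
    Finset.univ_nonempty
  have hmax' : ∀ v, d v ≤ d v0 := fun v => hmax v (Finset.mem_univ v)
  -- one-step closure
  have step : ∀ a b, ssgStep VE VA VR σ τ r1 r2 a b → d v0 ≤ d a → d v0 ≤ d b := by
    intro a b hab ha
    rcases hab with ⟨haE, rfl⟩ | ⟨haA, rfl⟩ | ⟨haR, hb⟩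
    · -- Eve vertex
      have h1 : val a = val (σ a) := by rw [hσval a, hE a haE]
      have h2 : val' (σ a) ≤ val' a := by
        rw [hE' a haE]
        exact le_csSup ((hfin a).image val').bddAbove ⟨σ a, hσmem a, rfl⟩
      have : d a ≤ d (σ a) := by simp only [hd]; linarith
      linarith
    · -- Adam vertex
      have h1 : val' a = val' (τ a) := by rw [hτval a, hA' a haA]
      have h2 : val a ≤ val (τ a) := by
        rw [hA a haA]
        exact csInf_le ((hfin a).image val).bddBelow ⟨τ a, hτmem a, rfl⟩
      have : d a ≤ d (τ a) := by simp only [hd]; linarith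
      linarith
    · -- random vertex
      have hda : d a = (d (r1 a) + d (r2 a)) / 2 := by
        simp only [hd, hR a haR, hR' a haR]; ring
      have h1 := hmax' (r1 a)
      have h2 := hmax' (r2 a)
      rcases hb with rfl | rfl
      · linarith
      · linarith
  -- closure under reachability
  have rtc : ∀ a b, Relation.ReflTransGen (ssgStep VE VA VR σ τ r1 r2) a b →
      d v0 ≤ d a → d v0 ≤ d b := by
    intro a b hab ha
    induction hab with
    | refl => exact ha
    | tail h1 h2 ih => exact step _ _ h2 ih
  -- conclude d v0 ≤ 0
  have h0 : d v0 ≤ 0 := by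
    rcases hstop σ τ (fun v _ => hσmem v) (fun v _ => hτmem v) v0 with h | h
    · have := rtc _ _ h le_rfl
      simpa [hd, hwinv, hwinv'] using this
    · have := rtc _ _ h le_rfl
      simpa [hd, hlosev, hlosev'] using this
  intro v
  have := le_trans (hmax' v) h0
  rw [hd v] at this
  linarith

/-- Uniqueness of the solution in `[0,1]^V` of Condon's local optimality
equations for a stopping simple stochastic game whose random vertices have two
successors, each with probability one half. -/
theorem stmt_16 {V : Type*} [Fintype V]
    (VE VA VR : Set V) (succ : V → Set V)
    (hsucc : ∀ v, (succ v).Nonempty) (hfin : ∀ v, (succ v).Finite)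
    (hcover : ∀ v, v ∈ VE ∨ v ∈ VA ∨ v ∈ VR)
    (hEA : Disjoint VE VA) (hER : Disjoint VE VR) (hAR : Disjoint VA VR)
    (r1 r2 : V → V) (hr : ∀ v ∈ VR, succ v = {r1 v, r2 v})
    (vwin vlose : V) (hw : succ vwin = {vwin}) (hl : succ vlose = {vlose})
    (hstop : ∀ σ τ : V → V, (∀ v ∈ VE, σ v ∈ succ v) → (∀ v ∈ VA, τ v ∈ succ v) →
      ∀ v : V, Relation.ReflTransGen (ssgStep VE VA VR σ τ r1 r2) v vwin ∨
        Relation.ReflTransGen (ssgStep VE VA VR σ τ r1 r2) v vlose)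
    (val val' : V → ℝ)
    (hval01 : ∀ v, val v ∈ Set.Icc (0 : ℝ) 1)
    (hval01' : ∀ v, val' v ∈ Set.Icc (0 : ℝ) 1)
    (hwinv : val vwin = 1) (hlosev : val vlose = 0)
    (hwinv' : val' vwin = 1) (hlosev' : val' vlose = 0)
    (hE : ∀ v ∈ VE, val v = sSup (val '' succ v))
    (hA : ∀ v ∈ VA, val v = sInf (val '' succ v))
    (hR : ∀ v ∈ VR, val v = (val (r1 v) + val (r2 v)) / 2)
    (hE' : ∀ v ∈ VE, val' v = sSup (val' '' succ v))
    (hA' : ∀ v ∈ VA, val' v = sInf (val' '' succ v))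
    (hR' : ∀ v ∈ VR, val' v = (val' (r1 v) + val' (r2 v)) / 2) :
    val = val' := by
  funext v
  exact le_antisymm
    (ssg_aux_le VE VA VR succ hsucc hfin r1 r2 vwin vlose hstop val val'
      hwinv hlosev hwinv' hlosev' hE hA hR hE' hA' hR' v)
    (ssg_aux_le VE VA VR succ hsucc hfin r1 r2 vwin vlose hstop val' val
      hwinv' hlosev' hwinv hlosev hE' hA' hR' hE hA hR v)
end

section
/- In a simple stochastic game with n vertices where all random vertices have two successors each with probability 1/2, the value of every vertex is a rational number p/q with 0 ≤ p ≤ q ≤ 4^{n−1}. -/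
open Matrix BigOperators Finset

lemma ssg_det_abs_le_prod_rowsum : ∀ {n : ℕ} (A : Matrix (Fin n) (Fin n) ℤ),
    |A.det| ≤ ∏ i, ∑ j, |A i j| := by
  intro n
  induction n with
  | zero => intro A; simp [Matrix.det_fin_zero]
  | succ n ih =>
    intro A
    rw [Matrix.det_succ_row_zero]
    have key : ∀ j : Fin (n+1),
        |(A.submatrix Fin.succ j.succAbove).det| ≤ ∏ i : Fin n, ∑ k : Fin (n+1), |A i.succ k| := by
      intro j
      refine le_trans (ih _) ?_
      apply Finset.prod_le_prod
      · intros; positivity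
      · intro i _
        have h := Fin.sum_univ_succAbove (fun k => |A i.succ k|) j
        have : (0:ℤ) ≤ |A i.succ j| := abs_nonneg _
        simp only [Matrix.submatrix_apply]
        omega
    calc |∑ j : Fin (n+1), (-1)^(j:ℕ) * A 0 j * (A.submatrix Fin.succ j.succAbove).det|
        ≤ ∑ j : Fin (n+1), |(-1)^(j:ℕ) * A 0 j * (A.submatrix Fin.succ j.succAbove).det| :=
          Finset.abs_sum_le_sum_abs _ _
      _ ≤ ∑ j, |A 0 j| * ∏ i : Fin n, ∑ k, |A i.succ k| := by
          apply Finset.sum_le_sum; intro j _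
          rw [abs_mul, abs_mul, abs_pow, abs_neg, abs_one, one_pow, one_mul]
          exact mul_le_mul_of_nonneg_left (key j) (abs_nonneg _)
      _ = (∑ j, |A 0 j|) * ∏ i : Fin n, ∑ k, |A i.succ k| := by rw [← Finset.sum_mul]
      _ = ∏ i, ∑ j, |A i j| :=
          (Fin.prod_univ_succ (fun i : Fin (n+1) => ∑ j : Fin (n+1), |A i j|)).symm

lemma ssg_det_abs_le {V : Type*} [Fintype V] [DecidableEq V] (A : Matrix V V ℤ) :
    |A.det| ≤ ∏ v, ∑ w, |A v w| := by
  have e : Fin (Fintype.card V) ≃ V := (Fintype.equivFin V).symm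
  have h1 : A.det = (A.submatrix e e).det := (Matrix.det_submatrix_equiv_self e A).symm
  rw [h1]
  refine le_trans (ssg_det_abs_le_prod_rowsum _) ?_
  rw [← Equiv.prod_comp e (fun v => ∑ w, |A v w|)]
  apply le_of_eq
  apply Finset.prod_congr rfl
  intro i _
  rw [← Equiv.sum_comp e (fun w => |A (e i) w|)]
  rfl

open Classical in
/-- The matrix of Condon's linear system for positional strategies σ, τ. -/
noncomputable def ssgMat {V : Type*} (VE VA : Set V) (σ τ r1 r2 : V → V)
    (vwin vlose : V) : Matrix V V ℤ :=
  Matrix.of fun v w =>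
    if v = vwin ∨ v = vlose then (if w = v then 1 else 0)
    else if v ∈ VE then (if w = v then 1 else 0) - (if w = σ v then 1 else 0)
    else if v ∈ VA then (if w = v then 1 else 0) - (if w = τ v then 1 else 0)
    else 2 * (if w = v then 1 else 0) - (if w = r1 v then 1 else 0) - (if w = r2 v then 1 else 0)

open Classical in
lemma ssgMat_mulVec {V : Type*} [Fintype V] (VE VA : Set V) (σ τ r1 r2 : V → V)
    (vwin vlose : V) (x : V → ℝ) (v : V) :
    ((ssgMat VE VA σ τ r1 r2 vwin vlose).map (fun z : ℤ => (z : ℝ))).mulVec x v =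
      if v = vwin ∨ v = vlose then x v
      else if v ∈ VE then x v - x (σ v)
      else if v ∈ VA then x v - x (τ v)
      else 2 * x v - x (r1 v) - x (r2 v) := by
  classical
  simp only [Matrix.mulVec, dotProduct, ssgMat, Matrix.map_apply, Matrix.of_apply]
  split_ifs with h1 h2 h3 <;>
    push_cast <;>
    simp [sub_mul, ite_mul, Finset.sum_sub_distrib, mul_assoc, ← Finset.mul_sum,
      Finset.sum_ite_eq']

lemma ssgMat_rowsum_win {V : Type*} [Fintype V] (VE VA : Set V) (σ τ r1 r2 : V → V)
    (vwin vlose : V) :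
    ∑ w, |ssgMat VE VA σ τ r1 r2 vwin vlose vwin w| = 1 := by
  classical
  simp only [ssgMat, Matrix.of_apply, if_pos (Or.inl (rfl : vwin = vwin))]
  have : ∀ w : V, |if w = vwin then (1:ℤ) else 0| = if w = vwin then 1 else 0 := by
    intro w; split_ifs <;> simp
  simp [this, Finset.sum_ite_eq']

lemma ssgMat_rowsum_le {V : Type*} [Fintype V] (VE VA : Set V) (σ τ r1 r2 : V → V)
    (vwin vlose : V) (v : V) :
    ∑ w, |ssgMat VE VA σ τ r1 r2 vwin vlose v w| ≤ 4 := by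
  classical
  by_cases h1 : v = vwin ∨ v = vlose
  · have key : ∀ w : V, |ssgMat VE VA σ τ r1 r2 vwin vlose v w| ≤
        (if w = v then 1 else 0) := by
      intro w; simp only [ssgMat, Matrix.of_apply, if_pos h1]
      split_ifs <;> norm_num
    refine le_trans (Finset.sum_le_sum (fun w _ => key w)) ?_
    simp [Finset.sum_ite_eq']
  · by_cases h2 : v ∈ VE
    · have key : ∀ w : V, |ssgMat VE VA σ τ r1 r2 vwin vlose v w| ≤
          (if w = v then 1 else 0) + (if w = σ v then 1 else 0) := by
        intro w; simp only [ssgMat, Matrix.of_apply, if_neg h1, if_pos h2]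
        split_ifs <;> norm_num
      refine le_trans (Finset.sum_le_sum (fun w _ => key w)) ?_
      simp [Finset.sum_add_distrib, Finset.sum_ite_eq']
    · by_cases h3 : v ∈ VA
      · have key : ∀ w : V, |ssgMat VE VA σ τ r1 r2 vwin vlose v w| ≤
            (if w = v then 1 else 0) + (if w = τ v then 1 else 0) := by
          intro w; simp only [ssgMat, Matrix.of_apply, if_neg h1, if_neg h2, if_pos h3]
          split_ifs <;> norm_num
        refine le_trans (Finset.sum_le_sum (fun w _ => key w)) ?_
        simp [Finset.sum_add_distrib, Finset.sum_ite_eq']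
      · have key : ∀ w : V, |ssgMat VE VA σ τ r1 r2 vwin vlose v w| ≤
            2 * (if w = v then 1 else 0) + (if w = r1 v then 1 else 0)
              + (if w = r2 v then 1 else 0) := by
          intro w; simp only [ssgMat, Matrix.of_apply, if_neg h1, if_neg h2, if_neg h3]
          split_ifs <;> norm_num
        refine le_trans (Finset.sum_le_sum (fun w _ => key w)) ?_
        simp [Finset.sum_add_distrib, ← Finset.mul_sum, Finset.sum_ite_eq']

lemma ssgMat_det_bound {V : Type*} [Fintype V] [DecidableEq V] (VE VA : Set V) (σ τ r1 r2 : V → V)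
    (vwin vlose : V) :
    |(ssgMat VE VA σ τ r1 r2 vwin vlose).det| ≤ 4 ^ (Fintype.card V - 1) := by
  classical
  set M := ssgMat VE VA σ τ r1 r2 vwin vlose with hM
  refine le_trans (ssg_det_abs_le M) ?_
  have h0 : ∀ v : V, (0:ℤ) ≤ ∑ w, |M v w| :=
    fun v => Finset.sum_nonneg (fun w _ => abs_nonneg _)
  calc ∏ v, ∑ w, |M v w|
      = (∑ w, |M vwin w|) * ∏ v ∈ Finset.univ.erase vwin, ∑ w, |M v w| :=
        (Finset.mul_prod_erase Finset.univ _ (Finset.mem_univ vwin)).symm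
    _ ≤ 1 * ∏ v ∈ Finset.univ.erase vwin, (4:ℤ) := by
        apply mul_le_mul
        · exact le_of_eq (ssgMat_rowsum_win VE VA σ τ r1 r2 vwin vlose)
        · exact Finset.prod_le_prod (fun v _ => h0 v)
            (fun v _ => ssgMat_rowsum_le VE VA σ τ r1 r2 vwin vlose v)
        · exact Finset.prod_nonneg (fun v _ => h0 v)
        · exact zero_le_one
    _ = 4 ^ (Fintype.card V - 1) := by
        rw [one_mul, Finset.prod_const, Finset.card_erase_of_mem (Finset.mem_univ vwin),
          Finset.card_univ]

lemma ssg_updateCol_map {V : Type*} [Fintype V] [DecidableEq V] (M : Matrix V V ℤ)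
    (b : V → ℤ) (v : V) :
    (M.map (fun z : ℤ => (z : ℝ))).updateCol v (fun w => ((b w : ℤ) : ℝ)) =
      (M.updateCol v b).map (fun z : ℤ => (z : ℝ)) := by
  ext i j
  by_cases h : j = v <;>
    simp [Matrix.updateCol_apply, Matrix.map_apply, h]

/-- In a stopping simple stochastic game with `n` vertices where all random
vertices have two successors each with probability one half, the value of every
vertex (the unique solution of Condon's local optimality equations) is a
rational `p / q` with `0 ≤ p ≤ q ≤ 4^(n-1)`. -/
theorem stmt_17 {V : Type*} [Fintype V]
    (VE VA VR : Set V) (succ : V → Set V)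
    (hsucc : ∀ v, (succ v).Nonempty) (hfin : ∀ v, (succ v).Finite)
    (hcover : ∀ v, v ∈ VE ∨ v ∈ VA ∨ v ∈ VR)
    (hEA : Disjoint VE VA) (hER : Disjoint VE VR) (hAR : Disjoint VA VR)
    (r1 r2 : V → V) (hr : ∀ v ∈ VR, succ v = {r1 v, r2 v})
    (vwin vlose : V) (hw : succ vwin = {vwin}) (hl : succ vlose = {vlose})
    (hstop : ∀ σ τ : V → V, (∀ v ∈ VE, σ v ∈ succ v) → (∀ v ∈ VA, τ v ∈ succ v) →
      ∀ v : V, Relation.ReflTransGen (ssgStep VE VA VR σ τ r1 r2) v vwin ∨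
        Relation.ReflTransGen (ssgStep VE VA VR σ τ r1 r2) v vlose)
    (val : V → ℝ)
    (hval01 : ∀ v, val v ∈ Set.Icc (0 : ℝ) 1)
    (hwinv : val vwin = 1) (hlosev : val vlose = 0)
    (hE : ∀ v ∈ VE, val v = sSup (val '' succ v))
    (hA : ∀ v ∈ VA, val v = sInf (val '' succ v))
    (hR : ∀ v ∈ VR, val v = (val (r1 v) + val (r2 v)) / 2) :
    ∀ v : V, ∃ p q : ℕ, 0 < q ∧ p ≤ q ∧ q ≤ 4 ^ (Fintype.card V - 1) ∧
      val v = (p : ℝ) / (q : ℝ) := by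
  classical
  -- optimal positional strategies
  have hσex : ∀ v : V, ∃ w, w ∈ succ v ∧ (v ∈ VE → val w = sSup (val '' succ v)) := by
    intro v
    by_cases h : v ∈ VE
    · obtain ⟨w, hw1, hw2⟩ := ((hsucc v).image val).csSup_mem ((hfin v).image val)
      exact ⟨w, hw1, fun _ => hw2⟩
    · exact ⟨(hsucc v).choose, (hsucc v).choose_spec, fun hvE => absurd hvE h⟩
  have hτex : ∀ v : V, ∃ w, w ∈ succ v ∧ (v ∈ VA → val w = sInf (val '' succ v)) := by
    intro v
    by_cases h : v ∈ VA
    · obtain ⟨w, hw1, hw2⟩ := ((hsucc v).image val).csInf_mem ((hfin v).image val)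
      exact ⟨w, hw1, fun _ => hw2⟩
    · exact ⟨(hsucc v).choose, (hsucc v).choose_spec, fun hvA => absurd hvA h⟩
  choose σf hσmem hσval using hσex
  choose τf hτmem hτval using hτex
  have hσv : ∀ v ∈ VE, val (σf v) = val v := fun v hv => (hσval v hv).trans (hE v hv).symm
  have hτv : ∀ v ∈ VA, val (τf v) = val v := fun v hv => (hτval v hv).trans (hA v hv).symm
  have hwl : vwin ≠ vlose := by
    intro h; rw [h, hlosev] at hwinv; norm_num at hwinv
  have hrabs : ∀ v, v ∈ VR → (v = vwin ∨ v = vlose) → r1 v = v ∧ r2 v = v := by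
    intro v hvR hv
    have h1 : succ v = {v} := by rcases hv with rfl | rfl; exacts [hw, hl]
    have h2 := hr v hvR
    constructor
    · have h3 : r1 v ∈ succ v := by rw [h2]; exact Set.mem_insert _ _
      rw [h1] at h3; exact h3
    · have h3 : r2 v ∈ succ v := by
        rw [h2]; exact Set.mem_insert_of_mem _ rfl
      rw [h1] at h3; exact h3
  set M : Matrix V V ℤ := ssgMat VE VA σf τf r1 r2 vwin vlose with hMdef
  set Mr : Matrix V V ℝ := M.map (fun z : ℤ => (z : ℝ)) with hMrdef
  set b : V → ℤ := fun v => if v = vwin then 1 else 0 with hbdef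
  set br : V → ℝ := fun v => if v = vwin then 1 else 0 with hbrdef
  have hrow : ∀ (x : V → ℝ) (v : V), Mr.mulVec x v =
      (if v = vwin ∨ v = vlose then x v
      else if v ∈ VE then x v - x (σf v)
      else if v ∈ VA then x v - x (τf v)
      else 2 * x v - x (r1 v) - x (r2 v)) := by
    intro x v
    rw [hMrdef, hMdef]
    exact ssgMat_mulVec VE VA σf τf r1 r2 vwin vlose x v
  -- val solves the system
  have hsys : Mr.mulVec val = br := by
    funext v
    rw [hrow]
    by_cases h1 : v = vwin ∨ v = vlose
    · rw [if_pos h1]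
      rcases h1 with rfl | rfl
      · simp [hbrdef, hwinv]
      · simp [hbrdef, hlosev, if_neg (Ne.symm hwl)]
    · rw [if_neg h1]
      have hbv : br v = 0 := by
        rw [hbrdef]; exact if_neg (fun h => h1 (Or.inl h))
      rcases hcover v with hv | hv | hv
      · rw [if_pos hv, hσv v hv, hbv, sub_self]
      · have hnE : v ∉ VE := fun h => Set.disjoint_left.mp hEA h hv
        rw [if_neg hnE, if_pos hv, hτv v hv, hbv, sub_self]
      · have hnE : v ∉ VE := fun h => Set.disjoint_left.mp hER h hv
        have hnA : v ∉ VA := fun h => Set.disjoint_left.mp hAR h hv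
        rw [if_neg hnE, if_neg hnA, hbv]
        have := hR v hv
        linarith
  -- uniqueness of solutions of the homogeneous system
  have huniq : ∀ x : V → ℝ, Mr.mulVec x = 0 → x = 0 := by
    intro x hx
    have hrow0 : ∀ v, (if v = vwin ∨ v = vlose then x v
        else if v ∈ VE then x v - x (σf v)
        else if v ∈ VA then x v - x (τf v)
        else 2 * x v - x (r1 v) - x (r2 v)) = 0 := by
      intro v
      rw [← hrow x v, hx]; rfl
    have hxwin : x vwin = 0 := by
      have := hrow0 vwin; rwa [if_pos (Or.inl rfl)] at this
    have hxlose : x vlose = 0 := by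
      have := hrow0 vlose; rwa [if_pos (Or.inr rfl)] at this
    have : Nonempty V := ⟨vwin⟩
    obtain ⟨v0, hv0⟩ := Finite.exists_max (fun v => |x v|)
    have hstep1 : ∀ a c, ssgStep VE VA VR σf τf r1 r2 a c → x a = x v0 → x c = x v0 := by
      intro a c hac hxa
      rcases hac with ⟨haE, rfl⟩ | ⟨haA, rfl⟩ | ⟨haR, hc⟩
      · by_cases h1 : a = vwin ∨ a = vlose
        · have hmem : σf a ∈ succ a := hσmem a
          have hsa : succ a = {a} := by rcases h1 with rfl | rfl; exacts [hw, hl]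
          rw [hsa] at hmem
          rw [hmem]; exact hxa
        · have h := hrow0 a
          rw [if_neg h1, if_pos haE] at h
          have : x (σf a) = x a := by linarith
          rw [this]; exact hxa
      · by_cases h1 : a = vwin ∨ a = vlose
        · have hmem : τf a ∈ succ a := hτmem a
          have hsa : succ a = {a} := by rcases h1 with rfl | rfl; exacts [hw, hl]
          rw [hsa] at hmem
          rw [hmem]; exact hxa
        · have hnE : a ∉ VE := fun h => Set.disjoint_left.mp hEA h haA
          have h := hrow0 a
          rw [if_neg h1, if_neg hnE, if_pos haA] at h
          have : x (τf a) = x a := by linarith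
          rw [this]; exact hxa
      · by_cases h1 : a = vwin ∨ a = vlose
        · obtain ⟨e1, e2⟩ := hrabs a haR h1
          rcases hc with rfl | rfl
          · rw [e1]; exact hxa
          · rw [e2]; exact hxa
        · have hnE : a ∉ VE := fun h => Set.disjoint_left.mp hER h haR
          have hnA : a ∉ VA := fun h => Set.disjoint_left.mp hAR h haR
          have heq := hrow0 a
          rw [if_neg h1, if_neg hnE, if_neg hnA] at heq
          have hb1 : |x (r1 a)| ≤ |x a| := by rw [hxa]; exact hv0 _
          have hb2 : |x (r2 a)| ≤ |x a| := by rw [hxa]; exact hv0 _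
          have c1 := abs_le.mp hb1
          have c2 := abs_le.mp hb2
          have e12 : x (r1 a) = x a ∧ x (r2 a) = x a := by
            rcases abs_cases (x a) with ⟨h, _⟩ | ⟨h, _⟩ <;>
              exact ⟨by rw [h] at c1 c2; linarith [c1.1, c1.2, c2.1, c2.2],
                by rw [h] at c1 c2; linarith [c1.1, c1.2, c2.1, c2.2]⟩
          rcases hc with rfl | rfl
          · rw [e12.1]; exact hxa
          · rw [e12.2]; exact hxa
    have hinv : ∀ {t : V}, Relation.ReflTransGen (ssgStep VE VA VR σf τf r1 r2) v0 t →
        x t = x v0 := by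
      intro t h
      induction h with
      | refl => rfl
      | tail _ hst ih => exact hstep1 _ _ hst ih
    have hx0 : x v0 = 0 := by
      rcases hstop σf τf (fun v _ => hσmem v) (fun v _ => hτmem v) v0 with h | h
      · rw [← hinv h]; exact hxwin
      · rw [← hinv h]; exact hxlose
    funext v
    have := hv0 v
    rw [hx0] at this
    simp only [abs_zero] at this
    exact abs_nonpos_iff.mp this
  -- determinant is nonzero
  have hdet0 : Mr.det ≠ 0 := by
    intro h
    obtain ⟨y, hy0, hy⟩ := Matrix.exists_mulVec_eq_zero_iff.mpr h
    exact hy0 (huniq y hy)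
  -- Cramer's rule
  have hc : Mr.cramer br = Mr.det • val := by
    have h1 : Mr.mulVec (Mr.cramer br) = Mr.det • br := Matrix.mulVec_cramer Mr br
    have h2 : Mr.mulVec (Mr.det • val) = Mr.det • br := by
      rw [Matrix.mulVec_smul, hsys]
    have h3 : Mr.mulVec (Mr.cramer br - Mr.det • val) = 0 := by
      rw [Matrix.mulVec_sub, h1, h2, sub_self]
    exact sub_eq_zero.mp (huniq _ h3)
  -- integrality
  have hdetr : Mr.det = ((M.det : ℤ) : ℝ) := by
    rw [hMrdef]
    exact (RingHom.map_det (Int.castRingHom ℝ) M).symm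
  have hcram : ∀ v, Mr.cramer br v = ((M.cramer b v : ℤ) : ℝ) := by
    intro v
    rw [Matrix.cramer_apply, Matrix.cramer_apply]
    have hbr' : br = fun w => ((b w : ℤ) : ℝ) := by
      funext w; rw [hbrdef, hbdef]
      by_cases h : w = vwin <;> simp [h]
    rw [hMrdef, hbr', ssg_updateCol_map M b v]
    exact (RingHom.map_det (Int.castRingHom ℝ) _).symm
  have hDabs : |M.det| ≤ 4 ^ (Fintype.card V - 1) := by
    rw [hMdef]; exact ssgMat_det_bound VE VA σf τf r1 r2 vwin vlose
  -- conclusion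
  intro v
  set N : ℤ := M.cramer b v with hNdef
  set D : ℤ := M.det with hDdef
  have hval : ((N : ℤ) : ℝ) = (D : ℝ) * val v := by
    have h := congrFun hc v
    rw [hcram v, Pi.smul_apply, smul_eq_mul, hdetr] at h
    exact h
  have hD0 : D ≠ 0 := by
    intro h
    apply hdet0
    rw [hdetr, h, Int.cast_zero]
  have hDr0 : ((D : ℤ) : ℝ) ≠ 0 := Int.cast_ne_zero.mpr hD0
  obtain ⟨h0v, h1v⟩ := hval01 v
  set N' : ℤ := if 0 ≤ D then N else -N with hN'def
  have hNr' : ((N' : ℤ) : ℝ) = |((D : ℤ) : ℝ)| * val v := by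
    by_cases h : 0 ≤ D
    · rw [hN'def, if_pos h, hval, abs_of_nonneg (by exact_mod_cast h)]
    · rw [hN'def, if_neg h]
      push_cast
      rw [hval, abs_of_neg (by exact_mod_cast (not_le.mp h))]
      ring
  have habs_cast : |((D : ℤ) : ℝ)| = ((|D| : ℤ) : ℝ) := by
    push_cast; ring
  have hN'0 : 0 ≤ N' := by
    have : (0 : ℝ) ≤ ((N' : ℤ) : ℝ) := by
      rw [hNr']; exact mul_nonneg (abs_nonneg _) h0v
    exact_mod_cast this
  have hN'le : N' ≤ |D| := by
    have h : ((N' : ℤ) : ℝ) ≤ ((|D| : ℤ) : ℝ) := by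
      rw [hNr', ← habs_cast]
      exact mul_le_of_le_one_right (abs_nonneg _) h1v
    exact_mod_cast h
  refine ⟨N'.toNat, D.natAbs, ?_, ?_, ?_, ?_⟩
  · exact Int.natAbs_pos.mpr hD0
  · have := Int.abs_eq_natAbs D
    omega
  · have h1 : (D.natAbs : ℤ) ≤ ((4 ^ (Fintype.card V - 1) : ℕ) : ℤ) := by
      push_cast [Int.natCast_natAbs]
      exact hDabs
    exact_mod_cast h1
  · have hp : ((N'.toNat : ℕ) : ℝ) = ((N' : ℤ) : ℝ) := by
      exact_mod_cast congrArg (fun z : ℤ => (z : ℝ)) (Int.toNat_of_nonneg hN'0)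
    have hq : ((D.natAbs : ℕ) : ℝ) = |((D : ℤ) : ℝ)| := by
      rw [Nat.cast_natAbs, Int.cast_abs]
    rw [hp, hq, hNr', mul_comm, mul_div_assoc, div_self (abs_ne_zero.mpr hDr0), mul_one]
end
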